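/- Let (C, C₋, C₊) be a Reedy category. Then the pair (Γ₋, Γ₊) is a Reedy structure on ∫N^{-,+}(C); that is, every morphism of ∫N^{-,+}(C) factors uniquely as a morphism of Γ₋ followed by a morphism of Γ₊, and the relation on objects of ∫N^{-,+}(C) given by P <' Q iff there exists a non-identity morphism P → Q in Γ₊ or a non-identity morphism Q → P in Γ₋ is well-founded. -/

import Mathlib

namespace ReedyPaper

open CategoryTheory

universe v₂ u₂ v₁ u₁ v u

variable {C : Type u} [Category.{v} C]

def IsIdMor {x y : C} (f : x ⟶ y) : Prop := ∃ h : x = y, f = eqToHom h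

structure ReedyStruct (C : Type u) [Category.{v} C] where
  neg : MorphismProperty C
  pos : MorphismProperty C
  neg_id : ∀ x : C, neg (𝟙 x)
  pos_id : ∀ x : C, pos (𝟙 x)
  neg_comp : ∀ {x y z : C} (f : x ⟶ y) (g : y ⟶ z), neg f → neg g → neg (f ≫ g)
  pos_comp : ∀ {x y z : C} (f : x ⟶ y) (g : y ⟶ z), pos f → pos g → pos (f ≫ g)
  factor_existsUnique : ∀ {x y : C} (f : x ⟶ y),
    ∃! t : Σ z : C, (x ⟶ z) × (z ⟶ y), neg t.2.1 ∧ pos t.2.2 ∧ t.2.1 ≫ t.2.2 = f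
  wf : WellFounded (fun x y : C =>
    (∃ f : x ⟶ y, pos f ∧ ¬ IsIdMor f) ∨ (∃ f : y ⟶ x, neg f ∧ ¬ IsIdMor f))

structure ChainObj (C : Type u) [Category.{v} C] where
  n : ℕ
  X : Fin (n + 1) ⥤ C

structure ChainHom (P Q : ChainObj C) where
  α : Fin (P.n + 1) →o Fin (Q.n + 1)
  θ : ∀ i : Fin (P.n + 1), P.X.obj i ⟶ Q.X.obj (α i)
  natural : ∀ {i j : Fin (P.n + 1)} (h : i ≤ j),
    P.X.map (homOfLE h) ≫ θ j = θ i ≫ Q.X.map (homOfLE (α.monotone h))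

theorem ChainHom.ext' {P Q : ChainObj C} {f g : ChainHom P Q}
    (hα : f.α = g.α) (hθ : HEq f.θ g.θ) : f = g := by
  cases f; cases g; cases hα; cases hθ; rfl

def ChainHom.id (P : ChainObj C) : ChainHom P P where
  α := OrderHom.id
  θ i := 𝟙 _
  natural h := (Category.comp_id _).trans (Category.id_comp _).symm

def ChainHom.comp {P Q S : ChainObj C} (f : ChainHom P Q) (g : ChainHom Q S) :
    ChainHom P S where
  α := g.α.comp f.α
  θ i := f.θ i ≫ g.θ (f.α i)
  natural {i j} h := by
    show P.X.map (homOfLE h) ≫ f.θ j ≫ g.θ (f.α j) =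
      (f.θ i ≫ g.θ (f.α i)) ≫ S.X.map (homOfLE (g.α.monotone (f.α.monotone h)))
    rw [← Category.assoc, f.natural h, Category.assoc, g.natural (f.α.monotone h),
      ← Category.assoc]

instance : Category (ChainObj C) where
  Hom := ChainHom
  id := ChainHom.id
  comp := ChainHom.comp
  id_comp f := ChainHom.ext' rfl (heq_of_eq (funext fun i => Category.id_comp _))
  comp_id f := ChainHom.ext' rfl (heq_of_eq (funext fun i => Category.comp_id _))
  assoc f g h := ChainHom.ext' rfl (heq_of_eq (funext fun i => Category.assoc _ _ _))

/-- The partial order on the hom-sets of `∫N(C)` (and of `∫N^{-,+}(C)`):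
`(α, θ) ≤ (α', θ')` iff `α ≤ α'` pointwise and `θ'ᵢ = Y(α(i) ≤ α'(i)) ∘ θᵢ` for all `i`. -/
def ChainHom.le {P Q : ChainObj C} (f g : ChainHom P Q) : Prop :=
  (∀ i, f.α i ≤ g.α i) ∧
    ∀ (i : Fin (P.n + 1)) (h : f.α i ≤ g.α i), g.θ i = f.θ i ≫ Q.X.map (homOfLE h)

theorem ChainHom.le_comp_right {P Q S : ChainObj C} {f f' : P ⟶ Q} (g : Q ⟶ S)
    (h : ChainHom.le f f') : ChainHom.le (f ≫ g) (f' ≫ g) := by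
  refine ⟨fun i => g.α.monotone (h.1 i), fun i hi => ?_⟩
  show f'.θ i ≫ g.θ (f'.α i) = (f.θ i ≫ g.θ (f.α i)) ≫ S.X.map (homOfLE hi)
  rw [h.2 i (h.1 i), Category.assoc, g.natural (h.1 i), ← Category.assoc]
  rfl

theorem ChainHom.le_comp_left {P Q S : ChainObj C} (f : P ⟶ Q) {g g' : Q ⟶ S}
    (h : ChainHom.le g g') : ChainHom.le (f ≫ g) (f ≫ g') := by
  refine ⟨fun i => h.1 (f.α i), fun i hi => ?_⟩
  show f.θ i ≫ g'.θ (f.α i) = (f.θ i ≫ g.θ (f.α i)) ≫ S.X.map (homOfLE hi)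
  rw [h.2 (f.α i) (h.1 (f.α i)), ← Category.assoc]
  rfl

/-- Objects of `∫N^{-,+}(C)`: chains all of whose morphisms lie in `C₋`. -/
structure NegObj (R : ReedyStruct C) where
  n : ℕ
  X : Fin (n + 1) ⥤ C
  negMap : ∀ {i j : Fin (n + 1)} (h : i ≤ j), R.neg (X.map (homOfLE h))

variable {R : ReedyStruct C}

/-- The underlying object of `∫N(C)`. -/
def NegObj.chain (P : NegObj R) : ChainObj C := ⟨P.n, P.X⟩

/-- Morphisms of `∫N^{-,+}(C)`: morphisms of `∫N(C)` all of whose components lie in `C₊`. -/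
def NegHomT (P Q : NegObj R) : Type v :=
  { f : P.chain ⟶ Q.chain // ∀ i, R.pos (f.θ i) }

def NegHomT.id (P : NegObj R) : NegHomT P P := ⟨𝟙 P.chain, fun _ => R.pos_id _⟩

def NegHomT.comp {P Q S : NegObj R} (f : NegHomT P Q) (g : NegHomT Q S) : NegHomT P S :=
  ⟨f.1 ≫ g.1, fun i => by
    show R.pos (f.1.θ i ≫ g.1.θ (f.1.α i))
    exact R.pos_comp _ _ (f.2 i) (g.2 _)⟩

theorem NegHomT.id_comp {P Q : NegObj R} (f : NegHomT P Q) : (NegHomT.id P).comp f = f := by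
  apply Subtype.ext
  show 𝟙 P.chain ≫ f.1 = f.1
  exact Category.id_comp f.1

theorem NegHomT.comp_id {P Q : NegObj R} (f : NegHomT P Q) : f.comp (NegHomT.id Q) = f := by
  apply Subtype.ext
  show f.1 ≫ 𝟙 Q.chain = f.1
  exact Category.comp_id f.1

theorem NegHomT.comp_assoc {P Q S T : NegObj R} (f : NegHomT P Q) (g : NegHomT Q S)
    (h : NegHomT S T) : (f.comp g).comp h = f.comp (g.comp h) := by
  apply Subtype.ext
  show (f.1 ≫ g.1) ≫ h.1 = f.1 ≫ (g.1 ≫ h.1)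
  exact Category.assoc f.1 g.1 h.1

/-- The category `∫N^{-,+}(C)`. -/
instance : Category (NegObj R) where
  Hom := NegHomT
  id := NegHomT.id
  comp := NegHomT.comp
  id_comp := NegHomT.id_comp
  comp_id := NegHomT.comp_id
  assoc := NegHomT.comp_assoc

/-- The order on the hom-sets of `∫N^{-,+}(C)`. -/
def NegHom.le {P Q : NegObj R} (f g : P ⟶ Q) : Prop := ChainHom.le f.1 g.1

/-- The equivalence relation `∼` on the hom-sets of `∫N^{-,+}(C)`: the
symmetric-transitive closure of `≤`. -/
def NegHom.equiv {P Q : NegObj R} (f g : P ⟶ Q) : Prop :=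
  Relation.EqvGen (fun a b : P ⟶ Q => NegHom.le a b) f g

theorem NegHom.le_comp_right {P Q S : NegObj R} {f f' : P ⟶ Q} (g : Q ⟶ S)
    (h : NegHom.le f f') : NegHom.le (f ≫ g) (f' ≫ g) :=
  ChainHom.le_comp_right g.1 h

theorem NegHom.le_comp_left {P Q S : NegObj R} (f : P ⟶ Q) {g g' : Q ⟶ S}
    (h : NegHom.le g g') : NegHom.le (f ≫ g) (f ≫ g') :=
  ChainHom.le_comp_left f.1 h

/-- Identity-reflectingness of a chain. -/
def NegObj.IdRefl (P : NegObj R) : Prop :=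
  ∀ {i j : Fin (P.n + 1)} (h : i ≤ j), IsIdMor (P.X.map (homOfLE h)) → i = j

/-- Objects of `∫N^{--,+}_+(C)`: identity-reflecting chains in `C₋`. -/
structure StrictObj (R : ReedyStruct C) where
  toNegObj : NegObj R
  idRefl : toNegObj.IdRefl

/-- Morphisms of `∫N^{--,+}_+(C)`: morphisms of `∫N^{-,+}(C)` with `α` injective. -/
def StrictHomT (P Q : StrictObj R) : Type v :=
  { f : P.toNegObj ⟶ Q.toNegObj // Function.Injective f.1.α }

def StrictHomT.id (P : StrictObj R) : StrictHomT P P :=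
  ⟨𝟙 P.toNegObj, fun _ _ h => h⟩

def StrictHomT.comp {P Q S : StrictObj R} (f : StrictHomT P Q) (g : StrictHomT Q S) :
    StrictHomT P S :=
  ⟨f.1 ≫ g.1, fun _ _ h => f.2 (g.2 h)⟩

/-- The category `∫N^{--,+}_+(C)`. -/
instance : Category (StrictObj R) where
  Hom := StrictHomT
  id := StrictHomT.id
  comp := StrictHomT.comp
  id_comp f := Subtype.ext (Category.id_comp f.1)
  comp_id f := Subtype.ext (Category.comp_id f.1)
  assoc f g h := Subtype.ext (Category.assoc f.1 g.1 h.1)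

/-- The order on the hom-sets of `∫N^{--,+}_+(C)`. -/
def StrictHom.le {P Q : StrictObj R} (f g : P ⟶ Q) : Prop := NegHom.le f.1 g.1

/-- The equivalence relation `∼` on the hom-sets of `∫N^{--,+}_+(C)`. -/
def StrictHom.equiv {P Q : StrictObj R} (f g : P ⟶ Q) : Prop :=
  Relation.EqvGen (fun a b : P ⟶ Q => StrictHom.le a b) f g

theorem StrictHom.le_comp_right {P Q S : StrictObj R} {f f' : P ⟶ Q} (g : Q ⟶ S)
    (h : StrictHom.le f f') : StrictHom.le (f ≫ g) (f' ≫ g) :=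
  NegHom.le_comp_right g.1 h

theorem StrictHom.le_comp_left {P Q S : StrictObj R} (f : P ⟶ Q) {g g' : Q ⟶ S}
    (h : StrictHom.le g g') : StrictHom.le (f ≫ g) (f ≫ g') :=
  NegHom.le_comp_left f.1 h

/-- Objects of `Down_*(C)`: the same as those of `∫N^{-,+}(C)`. -/
structure DownStar (R : ReedyStruct C) where
  obj : NegObj R

/-- The category `Down_*(C)`: hom-sets are the quotients of those of `∫N^{-,+}(C)`
by the symmetric-transitive closure of `≤`. -/
instance : Category (DownStar R) where
  Hom P Q := Quot (fun f g : P.obj ⟶ Q.obj => NegHom.le f g)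
  id P := Quot.mk _ (𝟙 P.obj)
  comp {P Q S} f g :=
    Quot.lift
      (fun f' => Quot.lift (fun g' => Quot.mk _ (f' ≫ g'))
        (fun _ _ hg => Quot.sound (NegHom.le_comp_left f' hg)) g)
      (fun f₁ f₂ hf => Quot.inductionOn g (fun g' =>
        Quot.sound (NegHom.le_comp_right g' hf))) f
  id_comp f := Quot.inductionOn f fun f' => congrArg (Quot.mk _) (Category.id_comp f')
  comp_id f := Quot.inductionOn f fun f' => congrArg (Quot.mk _) (Category.comp_id f')
  assoc f g h :=
    Quot.inductionOn f fun f' => Quot.inductionOn g fun g' => Quot.inductionOn h fun h' =>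
      congrArg (Quot.mk _) (Category.assoc f' g' h')

/-- Objects of `Down(C)`: the same as those of `∫N^{--,+}_+(C)`. -/
structure Down (R : ReedyStruct C) where
  obj : StrictObj R

/-- The category `Down(C)`: hom-sets are the quotients of those of `∫N^{--,+}_+(C)`
by the symmetric-transitive closure of `≤`. -/
instance : Category (Down R) where
  Hom P Q := Quot (fun f g : P.obj ⟶ Q.obj => StrictHom.le f g)
  id P := Quot.mk _ (𝟙 P.obj)
  comp {P Q S} f g :=
    Quot.lift
      (fun f' => Quot.lift (fun g' => Quot.mk _ (f' ≫ g'))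
        (fun _ _ hg => Quot.sound (StrictHom.le_comp_left f' hg)) g)
      (fun f₁ f₂ hf => Quot.inductionOn g (fun g' =>
        Quot.sound (StrictHom.le_comp_right g' hf))) f
  id_comp f := Quot.inductionOn f fun f' => congrArg (Quot.mk _) (Category.id_comp f')
  comp_id f := Quot.inductionOn f fun f' => congrArg (Quot.mk _) (Category.comp_id f')
  assoc f g h :=
    Quot.inductionOn f fun f' => Quot.inductionOn g fun g' => Quot.inductionOn h fun h' =>
      congrArg (Quot.mk _) (Category.assoc f' g' h')

/-- The quotient functor `∫N^{-,+}(C) → Down_*(C)`. -/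
def qStar (R : ReedyStruct C) : NegObj R ⥤ DownStar R where
  obj P := ⟨P⟩
  map f := Quot.mk _ f
  map_id _ := rfl
  map_comp _ _ := rfl

/-- The inclusion functor `Down(C) → Down_*(C)`. -/
def downInclusion (R : ReedyStruct C) : Down R ⥤ DownStar R where
  obj P := ⟨P.obj.toNegObj⟩
  map {P Q} f :=
    Quot.lift (fun f' : P.obj ⟶ Q.obj => Quot.mk _ f'.1) (fun _ _ h => Quot.sound h) f
  map_id _ := rfl
  map_comp {P Q S} f g := by
    induction f using Quot.ind
    induction g using Quot.ind
    rfl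

/-- The last-component functor `∫N(C) → C`. -/
def lastChain : ChainObj C ⥤ C where
  obj P := P.X.obj (Fin.last P.n)
  map {P Q} f := f.θ (Fin.last P.n) ≫ Q.X.map (homOfLE (Fin.le_last (f.α (Fin.last P.n))))
  map_id P := by
    show 𝟙 (P.X.obj (Fin.last P.n)) ≫ P.X.map (homOfLE (Fin.le_last (Fin.last P.n))) = 𝟙 _
    rw [Category.id_comp]
    exact P.X.map_id _
  map_comp {P Q S} f g := by
    show (f.θ (Fin.last P.n) ≫ g.θ (f.α (Fin.last P.n))) ≫
        S.X.map (homOfLE (Fin.le_last (g.α (f.α (Fin.last P.n))))) =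
      (f.θ (Fin.last P.n) ≫ Q.X.map (homOfLE (Fin.le_last (f.α (Fin.last P.n))))) ≫
        g.θ (Fin.last Q.n) ≫ S.X.map (homOfLE (Fin.le_last (g.α (Fin.last Q.n))))
    rw [Category.assoc, Category.assoc, ← Category.assoc (Q.X.map _),
      g.natural (Fin.le_last (f.α (Fin.last P.n))), Category.assoc, ← Functor.map_comp,
      homOfLE_comp]

theorem lastChain_eq_of_le {P Q : ChainObj C} {f g : P ⟶ Q} (h : ChainHom.le f g) :
    lastChain.map f = lastChain.map g := by
  show f.θ (Fin.last P.n) ≫ Q.X.map (homOfLE (Fin.le_last (f.α (Fin.last P.n)))) =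
    g.θ (Fin.last P.n) ≫ Q.X.map (homOfLE (Fin.le_last (g.α (Fin.last P.n))))
  rw [h.2 (Fin.last P.n) (h.1 (Fin.last P.n)), Category.assoc, ← Functor.map_comp,
    homOfLE_comp]

/-- The forgetful functor `∫N^{-,+}(C) → ∫N(C)`. -/
def negForget (R : ReedyStruct C) : NegObj R ⥤ ChainObj C where
  obj P := P.chain
  map f := f.1
  map_id _ := rfl
  map_comp _ _ := rfl

/-- The last-component functor `∫N^{-,+}(C) → C`. -/
def lastNeg (R : ReedyStruct C) : NegObj R ⥤ C := negForget R ⋙ lastChain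

/-- The forgetful functor `∫N^{--,+}_+(C) → ∫N^{-,+}(C)`. -/
def strictForget (R : ReedyStruct C) : StrictObj R ⥤ NegObj R where
  obj P := P.toNegObj
  map f := f.1
  map_id _ := rfl
  map_comp _ _ := rfl

/-- The last-component functor `∫N^{--,+}_+(C) → C`. -/
def lastStrict (R : ReedyStruct C) : StrictObj R ⥤ C := strictForget R ⋙ lastNeg R

/-- The last-component functor `Down_*(C) → C`. -/
def lastDownStar (R : ReedyStruct C) : DownStar R ⥤ C where
  obj P := (lastNeg R).obj P.obj
  map {P Q} f :=
    Quot.lift (fun f' : P.obj ⟶ Q.obj => (lastNeg R).map f')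
      (fun _ _ h => lastChain_eq_of_le h) f
  map_id P := (lastNeg R).map_id P.obj
  map_comp {P Q S} f g := by
    induction f using Quot.ind
    induction g using Quot.ind
    exact (lastNeg R).map_comp _ _

/-- The last-component functor `Down(C) → C`. -/
def lastDown (R : ReedyStruct C) : Down R ⥤ C where
  obj P := (lastStrict R).obj P.obj
  map {P Q} f :=
    Quot.lift (fun f' : P.obj ⟶ Q.obj => (lastStrict R).map f')
      (fun _ _ h => lastChain_eq_of_le h) f
  map_id P := (lastStrict R).map_id P.obj
  map_comp {P Q S} f g := by
    induction f using Quot.ind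
    induction g using Quot.ind
    exact (lastStrict R).map_comp _ _

/-- The wide subcategory `Γ₋` of `∫N^{-,+}(C)`: morphisms of the form
`(σ, id) : ([m], X ∘ σ) → ([n], X)` with `σ` surjective, i.e. morphisms whose simplicial
component is surjective and all of whose components are identities. -/
def GammaNeg (R : ReedyStruct C) {P Q : NegObj R} (f : P ⟶ Q) : Prop :=
  Function.Surjective f.1.α ∧ ∀ i, IsIdMor (f.1.θ i)

/-- The wide subcategory `Γ₊` of `∫N^{-,+}(C)`: morphisms `(δ, θ)` with `δ` injective. -/
def GammaPos (R : ReedyStruct C) {P Q : NegObj R} (f : P ⟶ Q) : Prop :=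
  Function.Injective f.1.α

/-- Whiskering (precomposition) with `lastF` is bijective on natural transformations
between functors out of `C`. -/
def WhiskerUnique {Γ : Type u₁} [Category.{v₁} Γ] (lastF : Γ ⥤ C) : Prop :=
  ∀ {D : Type u₂} [Category.{v₂} D] (F G : C ⥤ D)
    (ε : lastF ⋙ F ⟶ lastF ⋙ G), ∃! ε' : F ⟶ G, Functor.whiskerLeft lastF ε' = ε

/-- `lastF : Γ ⥤ C` is a weak 1-localization of `Γ` at the `last`-weak equivalences
(the morphisms sent by `lastF` to identities). -/
def IsWeakLocalizationAtLastWeq {Γ : Type u₁} [Category.{v₁} Γ] (lastF : Γ ⥤ C) : Prop :=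
  (∀ {P Q : Γ} (f : P ⟶ Q), IsIdMor (lastF.map f) → IsIso (lastF.map f)) ∧
  (∀ {E : Type u₂} [Category.{v₂} E] (G : Γ ⥤ E),
    (∀ {P Q : Γ} (f : P ⟶ Q), IsIdMor (lastF.map f) → IsIso (G.map f)) →
    ∃ H : C ⥤ E, Nonempty (lastF ⋙ H ≅ G)) ∧
  (∀ {E : Type u₂} [Category.{v₂} E] (H H' : C ⥤ E) (θ : lastF ⋙ H ≅ lastF ⋙ H'),
    ∃! θ' : H ≅ H', Functor.isoWhiskerLeft lastF θ' = θ)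

/- ===== Auxiliary lemmas ===== -/

section Aux

theorem isIdMor_id (x : C) : IsIdMor (𝟙 x) := ⟨rfl, by simp⟩

theorem isIdMor_eqToHom {x y : C} (h : x = y) : IsIdMor (eqToHom h) := ⟨h, rfl⟩

theorem heq_of_isIdMor {x y y' : C} {u : x ⟶ y} {v : x ⟶ y'} (hu : IsIdMor u)
    (hv : IsIdMor v) : HEq u v := by
  obtain ⟨h1, rfl⟩ := hu; obtain ⟨h2, rfl⟩ := hv; subst h1; subst h2; rfl

theorem isIdMor_comp_eqToHom_iff {x y y' : C} (u : x ⟶ y) (h : y = y') :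
    IsIdMor (u ≫ eqToHom h) ↔ IsIdMor u := by
  subst h; simp

theorem heq_comp_eqToHom {x y y' : C} (u : x ⟶ y) (e : y = y') :
    HEq (u ≫ eqToHom e) u := by subst e; simp

theorem eq_comp_eqToHom_of_heq {x y y' : C} (u : x ⟶ y) (v : x ⟶ y') (e : y = y')
    (h : HEq u v) : v = u ≫ eqToHom e := by subst e; rw [eq_of_heq h]; simp

variable {R : ReedyStruct C}

theorem ReedyStruct.pos_eqToHom (R : ReedyStruct C) {x y : C} (h : x = y) :
    R.pos (eqToHom h) := by subst h; simpa using R.pos_id x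

theorem ReedyStruct.neg_eqToHom (R : ReedyStruct C) {x y : C} (h : x = y) :
    R.neg (eqToHom h) := by subst h; simpa using R.neg_id x

/-- Abstract uniqueness of Reedy factorizations, with variable middle objects. -/
theorem factor_unique_aux (R : ReedyStruct C) {x z z' y : C} (g : x ⟶ z) (h : z ⟶ y)
    (g' : x ⟶ z') (h' : z' ⟶ y) (hg : R.neg g) (hh : R.pos h) (hg' : R.neg g')
    (hh' : R.pos h') (hc : g ≫ h = g' ≫ h') :
    ∃ e : z = z', g' = g ≫ eqToHom e ∧ h = eqToHom e ≫ h' := by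
  obtain ⟨t, _, hu⟩ := R.factor_existsUnique (g ≫ h)
  have h1 : (⟨z, g, h⟩ : Σ w : C, (x ⟶ w) × (w ⟶ y)) = t := hu _ ⟨hg, hh, rfl⟩
  have h2 : (⟨z', g', h'⟩ : Σ w : C, (x ⟶ w) × (w ⟶ y)) = t := hu _ ⟨hg', hh', hc.symm⟩
  have h3 := h1.trans h2.symm
  obtain ⟨e, hsnd⟩ := Sigma.mk.inj_iff.mp h3
  subst e
  obtain ⟨hgg, hhh⟩ := Prod.mk.inj (eq_of_heq hsnd)
  exact ⟨rfl, by simp [← hgg], by simp [← hhh]⟩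

theorem map_hom_congr {A : Type u₁} [Preorder A] (F : A ⥤ C) {a b : A} (u v : a ⟶ b) :
    F.map u = F.map v := congrArg F.map (Subsingleton.elim u v)

theorem map_homOfLE_congr {A : Type u₁} [Preorder A] (F : A ⥤ C) {a b a' b' : A}
    (ha : a = a') (hb : b = b') (h : a ≤ b) (h' : a' ≤ b') :
    F.map (homOfLE h') =
      eqToHom (congrArg F.obj ha.symm) ≫ F.map (homOfLE h) ≫ eqToHom (congrArg F.obj hb) := by
  subst ha; subst hb
  simp [map_hom_congr F (homOfLE h) (homOfLE h')]

/-- Extensionality for `ChainHom` via heterogeneous component equality. -/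
theorem ChainHom.ext_heq {P Q : ChainObj C} {f g : ChainHom P Q} (hα : f.α = g.α)
    (hθ : ∀ i, HEq (f.θ i) (g.θ i)) : f = g := by
  obtain ⟨fα, fθ, _⟩ := f
  obtain ⟨gα, gθ, _⟩ := g
  cases hα
  exact ChainHom.ext' rfl (heq_of_eq (funext fun i => eq_of_heq (hθ i)))

theorem ChainHom.congr_θ {P Q : ChainObj C} {u v : ChainHom P Q} (h : u = v)
    (i : Fin (P.n + 1)) : HEq (u.θ i) (v.θ i) := by cases h; rfl

theorem NegObj.ext' {P Q : NegObj R} (hn : P.n = Q.n) (hX : HEq P.X Q.X) : P = Q := by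
  cases P; cases Q; cases hn; cases hX; rfl

end Aux
section Aux2

variable {R : ReedyStruct C}

theorem fin_mono_bij_id {m n : ℕ} {α : Fin (m + 1) → Fin (n + 1)} (hmono : Monotone α)
    (hbij : Function.Bijective α) : ∀ i, ((α i : ℕ)) = (i : ℕ) := by
  have hcard : m + 1 = n + 1 := by
    simpa using Fintype.card_of_bijective hbij
  obtain rfl : m = n := by omega
  have hsm : StrictMono α := hmono.strictMono_of_injective hbij.1
  have hwf : WellFoundedLT (Fin (m + 1)) := inferInstance
  have hid : α = id := by
    refine (@StrictMono.range_inj (Fin (m + 1)) (Fin (m + 1)) _ _ hwf α id hsm strictMono_id).1 ?_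
    rw [Set.range_eq_univ.mpr hbij.2, Set.range_eq_univ.mpr Function.surjective_id]
  intro i; rw [hid]; rfl

/-- A morphism of `∫N^{-,+}(C)` whose simplicial component is an identity and all of whose
components are identities is itself an identity morphism. -/
theorem isIdMor_negHom {A B : NegObj R} (f : A ⟶ B) (hn : A.n = B.n)
    (hα : ∀ i, ((f.1.α i : ℕ)) = (i : ℕ)) (hθ : ∀ i, IsIdMor (f.1.θ i)) : IsIdMor f := by
  obtain ⟨an, aX, aneg⟩ := A
  obtain ⟨bn, bX, bneg⟩ := B
  obtain rfl : an = bn := hn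
  have hα' : ∀ i, f.1.α i = i := fun i => Fin.ext (hα i)
  have hobj : ∀ i, aX.obj i = bX.obj i := by
    intro i
    obtain ⟨h, _⟩ := hθ i
    have h' : aX.obj i = bX.obj (f.1.α i) := h
    rw [h', hα' i]
  have hX : aX = bX := by
    refine CategoryTheory.Functor.ext hobj ?_
    intro i j u
    have hu : u = homOfLE (leOfHom u) := Subsingleton.elim _ _
    rw [hu]
    have hnat := f.1.natural (leOfHom u)
    dsimp only [NegObj.chain] at hnat
    obtain ⟨hi, hti⟩ := hθ i
    obtain ⟨hj, htj⟩ := hθ j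
    rw [hti, htj] at hnat
    have hmap : bX.map (homOfLE ((f.1.α).monotone (leOfHom u))) =
        eqToHom (congrArg bX.obj (hα' i)) ≫ bX.map (homOfLE (leOfHom u)) ≫
          eqToHom (congrArg bX.obj (hα' j).symm) :=
      map_homOfLE_congr bX (hα' i).symm (hα' j).symm (leOfHom u) _
    replace hnat : aX.map (homOfLE (leOfHom u)) ≫ eqToHom hj =
        eqToHom hi ≫ bX.map (homOfLE ((f.1.α).monotone (leOfHom u))) := hnat
    rw [hmap] at hnat
    have h2 := congrArg (fun t => t ≫ eqToHom hj.symm) hnat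
    erw [Category.assoc, eqToHom_trans, eqToHom_refl, Category.comp_id] at h2
    rw [h2]
    erw [Category.assoc, Category.assoc, Category.assoc, eqToHom_trans_assoc, eqToHom_trans]
    rfl
  subst hX
  refine ⟨NegObj.ext' rfl (HEq.refl _), ?_⟩
  rw [eqToHom_refl]
  apply Subtype.ext
  refine ChainHom.ext_heq ?_ ?_
  · exact OrderHom.ext _ _ (funext hα')
  · intro i
    exact heq_of_isIdMor (hθ i) (isIdMor_id _)

end Aux2
section Aux3

/-- The pointwise relation on tuples: every component is equal or related, and at least one
component is related. -/
def ptw (r : C → C → Prop) (n : ℕ) (v w : Fin (n + 1) → C) : Prop :=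
  (∀ i, v i = w i ∨ r (v i) (w i)) ∧ ∃ i, r (v i) (w i)

theorem ptw_wf (r : C → C → Prop) (hr : WellFounded r) : ∀ n, WellFounded (ptw r n) := by
  intro n
  induction n with
  | zero =>
    refine Subrelation.wf (r := InvImage r (fun v => v 0)) ?_ (InvImage.wf _ hr)
    rintro v w ⟨_, i, hi⟩
    rwa [Subsingleton.elim (0 : Fin 1) i]
  | succ n ih =>
    refine Subrelation.wf
      (r := InvImage (Prod.Lex r (ptw r n)) (fun v => (v 0, fun j : Fin (n + 1) => v j.succ)))
      ?_ (InvImage.wf _ (WellFounded.prod_lex hr ih))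
    rintro v w ⟨hall, hex⟩
    show Prod.Lex r (ptw r n) (v 0, _) (w 0, _)
    by_cases h0 : r (v 0) (w 0)
    · exact Prod.Lex.left _ _ h0
    · have hv0 : v 0 = w 0 := (hall 0).resolve_right h0
      rw [hv0]
      refine Prod.Lex.right _ ⟨fun j => hall j.succ, ?_⟩
      obtain ⟨i, hi⟩ := hex
      refine Fin.cases ?_ ?_ i hi
      · intro h; exact absurd h h0
      · intro j hj; exact ⟨j, hj⟩

theorem lex_left' {r : C → C → Prop} {n m : ℕ} {v : Fin (n + 1) → C} {w : Fin (m + 1) → C}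
    (h : n < m) :
    PSigma.Lex Nat.lt (fun k => ptw r k) (⟨n, v⟩ : Σ' k : ℕ, Fin (k + 1) → C) ⟨m, w⟩ :=
  PSigma.Lex.left _ _ h

theorem lex_right' {r : C → C → Prop} {n m : ℕ} {v : Fin (n + 1) → C} {w : Fin (m + 1) → C}
    (h : n = m)
    (hall : ∀ (i : Fin (n + 1)) (j : Fin (m + 1)), (i : ℕ) = (j : ℕ) → v i = w j ∨ r (v i) (w j))
    (hex : ∃ (i : Fin (n + 1)) (j : Fin (m + 1)), (i : ℕ) = (j : ℕ) ∧ r (v i) (w j)) :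
    PSigma.Lex Nat.lt (fun k => ptw r k) (⟨n, v⟩ : Σ' k : ℕ, Fin (k + 1) → C) ⟨m, w⟩ := by
  subst h
  refine PSigma.Lex.right _ ⟨fun i => hall i i rfl, ?_⟩
  obtain ⟨i, j, hij, hrij⟩ := hex
  obtain rfl : i = j := Fin.ext hij
  exact ⟨i, hrij⟩

variable {R : ReedyStruct C}

theorem statement10_wf (R : ReedyStruct C) :
    WellFounded (fun P Q : NegObj R =>
      (∃ f : P ⟶ Q, GammaPos R f ∧ ¬ IsIdMor f) ∨
      (∃ f : Q ⟶ P, GammaNeg R f ∧ ¬ IsIdMor f)) := by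
  set r : C → C → Prop := fun x y =>
    (∃ f : x ⟶ y, R.pos f ∧ ¬ IsIdMor f) ∨ (∃ f : y ⟶ x, R.neg f ∧ ¬ IsIdMor f) with hrdef
  have hr : WellFounded r := R.wf
  refine Subrelation.wf
    (r := InvImage (PSigma.Lex Nat.lt (fun k => ptw r k))
      (fun P : NegObj R => (⟨P.n, fun i => P.X.obj i⟩ : Σ' k : ℕ, Fin (k + 1) → C))) ?_
    (InvImage.wf _ (WellFounded.psigma_lex Nat.lt_wfRel.wf (fun k => ptw_wf r hr k)))
  rintro P Q (⟨f, hpos, hnid⟩ | ⟨f, hneg, hnid⟩)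
  · have hinj : Function.Injective f.1.α := hpos
    have hle : P.n + 1 ≤ Q.n + 1 := by
      have := Fintype.card_le_of_injective _ hinj; rwa [Fintype.card_fin, Fintype.card_fin] at this
    rcases lt_or_eq_of_le (Nat.le_of_succ_le_succ hle) with hlt | hn
    · exact lex_left' hlt
    · have hbij : Function.Bijective f.1.α :=
        (Fintype.bijective_iff_injective_and_card _).mpr ⟨hinj, by rw [Fintype.card_fin, Fintype.card_fin]; exact congrArg Nat.succ hn⟩
      have hid := fin_mono_bij_id f.1.α.monotone hbij
      have hex : ∃ i, ¬ IsIdMor (f.1.θ i) := by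
        by_contra hall
        push_neg at hall
        exact hnid (isIdMor_negHom f hn hid fun i => hall i)
      refine lex_right' hn ?_ ?_
      · intro i j hij
        have hij' : f.1.α i = j := Fin.ext (by rw [hid i]; exact hij)
        by_cases hidm : IsIdMor (f.1.θ i)
        · left
          obtain ⟨e, _⟩ := hidm
          exact e.trans (congrArg Q.X.obj hij')
        · subst hij'
          exact Or.inr (Or.inl ⟨f.1.θ i, f.2 i, hidm⟩)
      · obtain ⟨i, hi⟩ := hex
        exact ⟨i, f.1.α i, (hid i).symm, Or.inl ⟨f.1.θ i, f.2 i, hi⟩⟩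
  · have hsurj : Function.Surjective f.1.α := hneg.1
    have hle : P.n + 1 ≤ Q.n + 1 := by
      have := Fintype.card_le_of_surjective _ hsurj; rwa [Fintype.card_fin, Fintype.card_fin] at this
    rcases lt_or_eq_of_le (Nat.le_of_succ_le_succ hle) with hlt | hn
    · exact lex_left' hlt
    · exfalso
      have hbij : Function.Bijective f.1.α :=
        (Fintype.bijective_iff_surjective_and_card _).mpr ⟨hsurj, by rw [Fintype.card_fin, Fintype.card_fin]; exact congrArg Nat.succ hn.symm⟩
      have hid := fin_mono_bij_id f.1.α.monotone hbij
      exact hnid (isIdMor_negHom f hn.symm hid hneg.2)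

end Aux3
section Fact

variable {R : ReedyStruct C} {P Q : NegObj R} (f : P ⟶ Q)

/-- The image of the simplicial component of `f`. -/
def fS : Finset (Fin (Q.n + 1)) := Finset.image (⇑f.1.α) Finset.univ

theorem fS_mem (i : Fin (P.n + 1)) : f.1.α i ∈ fS f :=
  Finset.mem_image_of_mem _ (Finset.mem_univ i)

/-- One less than the cardinality of the image. -/
def fk : ℕ := (fS f).card - 1

theorem fS_card : (fS f).card = fk f + 1 := by
  have : 0 < (fS f).card := Finset.card_pos.mpr ⟨f.1.α 0, fS_mem f 0⟩
  unfold fk; omega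

/-- The injective part of the factorization of the simplicial component. -/
def fδ : Fin (fk f + 1) ↪o Fin (Q.n + 1) := (fS f).orderEmbOfFin (fS_card f)

theorem fδ_mem (a : Fin (fk f + 1)) : fδ f a ∈ fS f := Finset.orderEmbOfFin_mem _ _ a

/-- The surjective part of the factorization of the simplicial component. -/
def fσ : Fin (P.n + 1) → Fin (fk f + 1) :=
  fun i => ((fS f).orderIsoOfFin (fS_card f)).symm ⟨f.1.α i, fS_mem f i⟩

theorem fδσ (i : Fin (P.n + 1)) : fδ f (fσ f i) = f.1.α i := by
  show ((fS f).orderEmbOfFin (fS_card f)) (((fS f).orderIsoOfFin (fS_card f)).symm _) = _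
  rw [← Finset.coe_orderIsoOfFin_apply, OrderIso.apply_symm_apply]

theorem fσ_mono : Monotone (fσ f) := by
  intro i j hij
  exact ((fS f).orderIsoOfFin (fS_card f)).symm.monotone
    (Subtype.mk_le_mk.mpr (f.1.α.monotone hij))

theorem fσ_surj : Function.Surjective (fσ f) := by
  intro a
  obtain ⟨i, -, hi⟩ := Finset.mem_image.mp (fδ_mem f a)
  exact ⟨i, (fδ f).injective (by rw [fδσ f i, hi])⟩

/-- A monotone section of `fσ`. -/
def fsec : Fin (fk f + 1) → Fin (P.n + 1) := fun a =>
  (Finset.univ.filter fun i => fσ f i = a).min'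
    (by obtain ⟨i, hi⟩ := fσ_surj f a
        exact ⟨i, Finset.mem_filter.mpr ⟨Finset.mem_univ i, hi⟩⟩)

theorem fσsec (a : Fin (fk f + 1)) : fσ f (fsec f a) = a := by
  unfold fsec
  exact (Finset.mem_filter.mp (Finset.min'_mem (Finset.univ.filter fun i => fσ f i = a) _)).2

theorem fsec_le (i : Fin (P.n + 1)) : fsec f (fσ f i) ≤ i := by
  unfold fsec
  exact Finset.min'_le (Finset.univ.filter fun j => fσ f j = fσ f i) i (Finset.mem_filter.mpr ⟨Finset.mem_univ i, rfl⟩)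

theorem fsec_mono : Monotone (fsec f) := by
  intro a b hab
  by_contra hcon
  push_neg at hcon
  have h1 : fσ f (fsec f b) ≤ fσ f (fsec f a) := fσ_mono f hcon.le
  rw [fσsec, fσsec] at h1
  have hab' : a = b := le_antisymm hab h1
  rw [hab'] at hcon
  exact absurd hcon (lt_irrefl _)

theorem fsecα (i : Fin (P.n + 1)) : f.1.α (fsec f (fσ f i)) = f.1.α i := by
  rw [← fδσ, fσsec, fδσ]

/-- The key collapsing lemma, from uniqueness of Reedy factorizations in `C`. -/
theorem collapse {i j : Fin (P.n + 1)} (hij : i ≤ j) (hαij : f.1.α i = f.1.α j) :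
    ∃ E : P.X.obj i = P.X.obj j, P.X.map (homOfLE hij) = eqToHom E ∧
      f.1.θ i = eqToHom E ≫ f.1.θ j ≫ eqToHom (congrArg Q.X.obj hαij.symm) := by
  have hQmap : Q.X.map (homOfLE (f.1.α.monotone hij)) = eqToHom (congrArg Q.X.obj hαij) := by
    erw [show homOfLE (f.1.α.monotone hij) = eqToHom hαij from Subsingleton.elim _ _, eqToHom_map]
  have hnat := f.1.natural hij
  dsimp only [NegObj.chain] at hnat
  have hc : 𝟙 (P.X.obj i) ≫ f.1.θ i =
      P.X.map (homOfLE hij) ≫ (f.1.θ j ≫ eqToHom (congrArg Q.X.obj hαij.symm)) := by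
    erw [Category.id_comp, ← Category.assoc, hnat, hQmap]
    erw [Category.assoc, eqToHom_trans, eqToHom_refl, Category.comp_id]
  obtain ⟨E, h1, h2⟩ := factor_unique_aux R (𝟙 (P.X.obj i)) (f.1.θ i) (P.X.map (homOfLE hij))
    (f.1.θ j ≫ eqToHom (congrArg Q.X.obj hαij.symm)) (R.neg_id _) (f.2 i) (P.negMap hij)
    (R.pos_comp _ _ (f.2 j) (R.pos_eqToHom _)) hc
  exact ⟨E, by rw [h1]; simp, by rw [h2]; rfl⟩

/-- Object equalities coming from the collapsing lemma. -/
noncomputable def fE (i : Fin (P.n + 1)) : P.X.obj (fsec f (fσ f i)) = P.X.obj i :=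
  (collapse f (fsec_le f i) (fsecα f i)).choose

theorem fE_map (i : Fin (P.n + 1)) :
    P.X.map (homOfLE (fsec_le f i)) = eqToHom (fE f i) :=
  (collapse f (fsec_le f i) (fsecα f i)).choose_spec.1

theorem fE_θ (i : Fin (P.n + 1)) :
    f.1.θ (fsec f (fσ f i)) = eqToHom (fE f i) ≫ f.1.θ i ≫
      eqToHom (congrArg Q.X.obj (fsecα f i).symm) :=
  (collapse f (fsec_le f i) (fsecα f i)).choose_spec.2

end Fact
section Fact2

theorem heq_of_comp_eqToHom_eq {w x y z : C} {u : w ⟶ x} {v : y ⟶ z} (hw : w = y)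
    (hx : x = z) (h : u ≫ eqToHom hx = eqToHom hw ≫ v) : HEq u v := by
  subst hw; subst hx
  simp only [eqToHom_refl, Category.comp_id, Category.id_comp] at h
  exact heq_of_eq h

theorem conj_of_heq {w x y z : C} {u : w ⟶ x} {v : y ⟶ z} (hw : w = y) (hx : x = z)
    (h : HEq u v) : u = eqToHom hw ≫ v ≫ eqToHom hx.symm := by
  subst hw; subst hx
  rw [eq_of_heq h]; simp

theorem heq_eqToHom_comp {x x' y : C} (e : x' = x) (u : x ⟶ y) : HEq (eqToHom e ≫ u) u := by
  subst e; simp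

theorem map_homOfLE_heq {A : Type u₁} [Preorder A] (F : A ⥤ C) {a b a' b' : A}
    (ha : a = a') (hb : b = b') (h : a ≤ b) (h' : a' ≤ b') :
    HEq (F.map (homOfLE h)) (F.map (homOfLE h')) := by
  subst ha; subst hb
  exact heq_of_eq (map_hom_congr F _ _)

variable {R : ReedyStruct C} {P Q : NegObj R} (f : P ⟶ Q)

/-- The middle object of the factorization. -/
def fM : NegObj R where
  n := fk f
  X := (fsec_mono f).functor ⋙ P.X
  negMap {a b} h := P.negMap (fsec_mono f (leOfHom (homOfLE h)))

theorem fM_map {a b : Fin (fk f + 1)} (h : a ≤ b) :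
    (fM f).X.map (homOfLE h) = P.X.map (homOfLE (fsec_mono f h)) := rfl

/-- Components of the `Γ₋`-part of the factorization. -/
noncomputable def fgθ (i : Fin (P.n + 1)) : P.chain.X.obj i ⟶ (fM f).chain.X.obj (fσ f i) :=
  eqToHom (fE f i).symm

/-- The chain morphism underlying the `Γ₋`-part of the factorization. -/
noncomputable def fgChain : ChainHom P.chain (fM f).chain :=
  ⟨⟨fσ f, fσ_mono f⟩, fun i => fgθ f i, by
    intro (i : Fin (P.n + 1)) (j : Fin (P.n + 1)) hij
    unfold fgθ
    dsimp only [NegObj.chain]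
    show P.X.map (homOfLE hij) ≫ eqToHom (fE f j).symm =
      eqToHom (fE f i).symm ≫ (fM f).X.map (homOfLE (fσ_mono f hij))
    rw [fM_map]
    have w1 : P.X.map (homOfLE (fsec_le f i)) ≫ P.X.map (homOfLE hij) =
        P.X.map (homOfLE (fsec_mono f (fσ_mono f hij))) ≫ P.X.map (homOfLE (fsec_le f j)) := by
      rw [← Functor.map_comp, ← Functor.map_comp]
      exact map_hom_congr P.X _ _
    rw [fE_map f i, fE_map f j] at w1
    rw [eqToHom_comp_iff] at w1
    rw [w1]
    simp
    rfl⟩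

/-- The `Γ₋`-part of the factorization. -/
noncomputable def fg : P ⟶ fM f :=
  ⟨fgChain f, fun i => by
    show R.pos (fgθ f i)
    unfold fgθ
    exact R.pos_eqToHom _⟩

theorem fαsec (a : Fin (fk f + 1)) : f.1.α (fsec f a) = fδ f a := by
  rw [← fδσ f (fsec f a), fσsec]

/-- Components of the `Γ₊`-part of the factorization. -/
noncomputable def fhθ (a : Fin (fk f + 1)) :
    (fM f).chain.X.obj a ⟶ Q.chain.X.obj (fδ f a) :=
  f.1.θ (fsec f a) ≫ eqToHom (congrArg Q.X.obj (fαsec f a))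

/-- The chain morphism underlying the `Γ₊`-part of the factorization. -/
noncomputable def fhChain : ChainHom (fM f).chain Q.chain :=
  ⟨⟨⇑(fδ f), (fδ f).monotone⟩, fun a => fhθ f a, by
    intro (a : Fin (fk f + 1)) (b : Fin (fk f + 1)) hab
    unfold fhθ
    dsimp only [NegObj.chain]
    show (fM f).X.map (homOfLE hab) ≫
        (f.1.θ (fsec f b) ≫ eqToHom (congrArg Q.X.obj (fαsec f b))) =
      (f.1.θ (fsec f a) ≫ eqToHom (congrArg Q.X.obj (fαsec f a))) ≫
        Q.X.map (homOfLE ((fδ f).monotone hab))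
    rw [fM_map]
    have hnat := f.1.natural (fsec_mono f hab)
    dsimp only [NegObj.chain] at hnat
    erw [← Category.assoc, hnat, Category.assoc, Category.assoc]
    refine congrArg (fun t => f.1.θ (fsec f a) ≫ t) ?_
    erw [← eqToHom_map Q.X (fαsec f b), ← eqToHom_map Q.X (fαsec f a), ← Functor.map_comp, ← Functor.map_comp]
    exact map_hom_congr Q.X _ _⟩

/-- The `Γ₊`-part of the factorization. -/
noncomputable def fh : fM f ⟶ Q :=
  ⟨fhChain f, fun a => by
    show R.pos (fhθ f a)
    unfold fhθ
    exact R.pos_comp _ _ (f.2 _) (R.pos_eqToHom _)⟩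

theorem fg_gammaNeg : GammaNeg R (fg f) := by
  constructor
  · show Function.Surjective (fσ f)
    exact fσ_surj f
  · intro i
    show IsIdMor (fgθ f i)
    unfold fgθ
    exact isIdMor_eqToHom _

theorem fh_gammaPos : GammaPos R (fh f) := by
  show Function.Injective (⇑(fδ f))
  exact (fδ f).injective

theorem fgh : fg f ≫ fh f = f := by
  apply Subtype.ext
  refine ChainHom.ext_heq ?_ ?_
  · exact OrderHom.ext _ _ (funext fun i => fδσ f i)
  · intro (i : Fin (P.n + 1))
    show HEq (fgθ f i ≫ fhθ f (fσ f i)) (f.1.θ i)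
    unfold fgθ fhθ
    rw [fE_θ f i]
    refine (heq_eqToHom_comp _ _).trans ?_
    refine (heq_comp_eqToHom _ _).trans ?_
    refine (heq_eqToHom_comp _ _).trans ?_
    exact heq_comp_eqToHom _ _

end Fact2
section Fact3

variable {R : ReedyStruct C} {P Q : NegObj R} (f : P ⟶ Q)

theorem funiq (t : Σ M : NegObj R, (P ⟶ M) × (M ⟶ Q))
    (ht : GammaNeg R t.2.1 ∧ GammaPos R t.2.2 ∧ t.2.1 ≫ t.2.2 = f) :
    t = ⟨fM f, fg f, fh f⟩ := by
  obtain ⟨⟨Mn, MX, Mneg⟩, g, h⟩ := t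
  obtain ⟨hgneg, hhpos, hghf⟩ := ht
  have hchain : (g ≫ h).1 = f.1 := congrArg Subtype.val hghf
  have hαc : ∀ i, h.1.α (g.1.α i) = f.1.α i := fun i =>
    congrFun (congrArg (fun c : ChainHom P.chain Q.chain => (⇑c.α : Fin _ → Fin _)) hchain) i
  have hθc : ∀ i, HEq (g.1.θ i ≫ h.1.θ (g.1.α i)) (f.1.θ i) := fun i =>
    ChainHom.congr_θ hchain i
  have hinj : Function.Injective ⇑h.1.α := hhpos
  have hsurj : Function.Surjective ⇑g.1.α := hgneg.1
  have hid := hgneg.2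
  have hSeq : Finset.image (⇑h.1.α) Finset.univ = fS f := by
    apply Finset.ext
    intro x
    constructor
    · intro hx
      obtain ⟨a, -, rfl⟩ := Finset.mem_image.mp hx
      obtain ⟨i, rfl⟩ := hsurj a
      rw [hαc i]
      exact fS_mem f i
    · intro hx
      obtain ⟨i, -, rfl⟩ :=
        Finset.mem_image.mp (show x ∈ Finset.image (⇑f.1.α) Finset.univ from hx)
      exact Finset.mem_image.mpr ⟨g.1.α i, Finset.mem_univ _, hαc i⟩
  have hn : Mn = fk f := by
    have h1 : (Finset.image (⇑h.1.α) Finset.univ).card = Mn + 1 := by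
      rw [Finset.card_image_of_injective _ hinj, Finset.card_univ, Fintype.card_fin]
      rfl
    erw [hSeq, fS_card] at h1
    omega
  subst hn
  have hδeq : ∀ a, h.1.α a = fδ f a := by
    have e : OrderEmbedding.ofStrictMono ⇑h.1.α (h.1.α.monotone.strictMono_of_injective hinj) =
        (fS f).orderEmbOfFin (fS_card f) := by
      refine Finset.orderEmbOfFin_unique' _ fun a => ?_
      rw [← hSeq]
      exact Finset.mem_image_of_mem _ (Finset.mem_univ a)
    intro a
    exact congrArg (fun F : Fin (fk f + 1) ↪o Fin (Q.n + 1) => F a) e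
  have hσeq : ∀ i, g.1.α i = fσ f i := by
    intro i
    apply (fδ f).injective
    erw [← hδeq, hαc i, fδσ]
  have ha2 : ∀ a, g.1.α (fsec f a) = a := fun a => by erw [hσeq, fσsec]
  have hobj : ∀ a, MX.obj a = ((fsec_mono f).functor ⋙ P.X).obj a := by
    intro a
    obtain ⟨e, -⟩ := hid (fsec f a)
    exact ((show P.X.obj (fsec f a) = MX.obj (g.1.α (fsec f a)) from e).trans
      (congrArg MX.obj (ha2 a))).symm
  have hX : MX = (fsec_mono f).functor ⋙ P.X := by
    refine CategoryTheory.Functor.ext hobj ?_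
    intro a b u
    rw [show u = homOfLE (leOfHom u) from Subsingleton.elim _ _]
    have hnat := g.1.natural (fsec_mono f (leOfHom u))
    dsimp only [NegObj.chain] at hnat
    obtain ⟨ea, hta⟩ := hid (fsec f a)
    obtain ⟨eb, htb⟩ := hid (fsec f b)
    rw [hta, htb] at hnat
    have h1 : HEq (P.X.map (homOfLE (fsec_mono f (leOfHom u))))
        (MX.map (homOfLE (g.1.α.monotone (fsec_mono f (leOfHom u))))) :=
      heq_of_comp_eqToHom_eq ea eb hnat
    have h2 : HEq (MX.map (homOfLE (g.1.α.monotone (fsec_mono f (leOfHom u)))))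
        (MX.map (homOfLE (leOfHom u))) :=
      map_homOfLE_heq MX (ha2 a) (ha2 b) _ _
    have h4 := conj_of_heq (hobj a) (hobj b) (h1.trans h2).symm
    rw [h4]
    rfl
  subst hX
  have hgeq : g = fg f := by
    apply Subtype.ext
    refine ChainHom.ext_heq ?_ ?_
    · exact OrderHom.ext _ _ (funext hσeq)
    · intro i
      exact heq_of_isIdMor (hid i)
        (show IsIdMor (fgθ f i) by unfold fgθ; exact isIdMor_eqToHom _)
  have hheq : h = fh f := by
    apply Subtype.ext
    refine ChainHom.ext_heq ?_ ?_
    · exact OrderHom.ext _ _ (funext hδeq)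
    · intro a
      obtain ⟨ea, hta⟩ := hid (fsec f a)
      have w1 := hθc (fsec f a)
      rw [hta] at w1
      have w2 : HEq (h.1.θ (g.1.α (fsec f a))) (f.1.θ (fsec f a)) :=
        (heq_eqToHom_comp ea _).symm.trans w1
      have w3 : HEq (h.1.θ a) (h.1.θ (g.1.α (fsec f a))) := by
        rw [ha2 a]
      have w4 : HEq (f.1.θ (fsec f a)) (fhθ f a) := by
        unfold fhθ
        exact (heq_comp_eqToHom _ _).symm
      exact (w3.trans w2).trans w4
  rw [hgeq, hheq]
  rfl

end Fact3
section Statements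

variable (R : ReedyStruct C)

theorem statement10 :
    (∀ {P Q : NegObj R} (f : P ⟶ Q),
      ∃! t : Σ M : NegObj R, (P ⟶ M) × (M ⟶ Q),
        GammaNeg R t.2.1 ∧ GammaPos R t.2.2 ∧ t.2.1 ≫ t.2.2 = f) ∧
    WellFounded (fun P Q : NegObj R =>
      (∃ f : P ⟶ Q, GammaPos R f ∧ ¬ IsIdMor f) ∨
      (∃ f : Q ⟶ P, GammaNeg R f ∧ ¬ IsIdMor f)) := by
  constructor
  · intro P Q f
    exact ⟨⟨fM f, fg f, fh f⟩, ⟨fg_gammaNeg f, fh_gammaPos f, fgh f⟩, fun t ht => funiq f t ht⟩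
  · exact statement10_wf R

end Statements

end ReedyPaper
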